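/- Let η, ν₁, ν₂ > 0 and fix c > 0. There exist constants C > 0 and δ > 0 such that for every ρ with 0 < ρ ≤ c, every pair of differentiable functions u, Z : ℝ → ℂ satisfying u'(t) = ν₁ ρ Z(t) and Z'(t) = −η ρ² Z(t) − (ν₂/2) ρ u(t) for all t ≥ 0, and every t ≥ 0, one has |u(t)| + |Z(t)| ≤ C·e^{−δρ²t}·(|u(0)| + |Z(0)|). -/

import Mathlib

-- key quadratic-form inequality
lemma quad_key (η ν₁ ν₂ c ε ρ X Y S : ℝ) (hη : 0 < η) (hν₁ : 0 < ν₁) (hν₂ : 0 < ν₂)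
    (hc : 0 < c) (hεpos : 0 < ε) (hε1 : ε ≤ η / 2) (hε2 : ε * (η * c ^ 2) ≤ ν₁ * ν₂)
    (hρ : 0 < ρ) (hρc : ρ ≤ c) (hX : 0 ≤ X) (hY : 0 ≤ Y) (hS : S ^ 2 ≤ X * Y) :
    -(2 * ν₁ * η * ρ ^ 2) * Y + ε * ρ ^ 2 * ν₁ * Y - ε * η * ρ ^ 3 * S
      - ε * (ν₂ / 2) * ρ ^ 2 * X ≤
    -(ε / 2 * ρ ^ 2) * (ν₂ / 2 * X + (ν₁ * Y + ε * ρ * S)) := by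
  have hB2 : (ε * (η - ε / 2) * ρ * S) ^ 2 ≤ (ν₁ * η * Y + ε * ν₂ / 4 * X) ^ 2 := by
    have h0 : 0 ≤ η - ε / 2 := by linarith
    have e1 : (ε * (η - ε / 2) * ρ * S) ^ 2 ≤ ε ^ 2 * η ^ 2 * c ^ 2 * S ^ 2 := by
      have ha : (η - ε / 2) * ρ ≤ η * c := by nlinarith [mul_pos hεpos hρ, mul_le_mul_of_nonneg_left hρc hη.le]
      have h1 : (η - ε / 2) ^ 2 * ρ ^ 2 ≤ η ^ 2 * c ^ 2 := by
        nlinarith [ha, mul_nonneg h0 hρ.le]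
      calc (ε * (η - ε / 2) * ρ * S) ^ 2
          = ε ^ 2 * ((η - ε / 2) ^ 2 * ρ ^ 2) * S ^ 2 := by ring
        _ ≤ ε ^ 2 * (η ^ 2 * c ^ 2) * S ^ 2 := by
            apply mul_le_mul_of_nonneg_right _ (sq_nonneg S)
            exact mul_le_mul_of_nonneg_left h1 (sq_nonneg ε)
        _ = ε ^ 2 * η ^ 2 * c ^ 2 * S ^ 2 := by ring
    have e2 : ε ^ 2 * η ^ 2 * c ^ 2 * S ^ 2 ≤ ε ^ 2 * η ^ 2 * c ^ 2 * (X * Y) :=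
      mul_le_mul_of_nonneg_left hS (by positivity)
    have e3 : ε ^ 2 * η ^ 2 * c ^ 2 * (X * Y) ≤ ε * ν₁ * ν₂ * η * (X * Y) := by
      have hxy : 0 ≤ X * Y := mul_nonneg hX hY
      have r1 : ε ^ 2 * η ^ 2 * c ^ 2 = (ε * (η * c ^ 2)) * (ε * η) := by ring
      have r2 : ε * ν₁ * ν₂ * η = (ν₁ * ν₂) * (ε * η) := by ring
      rw [r1, r2]
      exact mul_le_mul_of_nonneg_right
        (mul_le_mul_of_nonneg_right hε2 (by positivity)) hxy
    have e4 : ε * ν₁ * ν₂ * η * (X * Y) ≤ (ν₁ * η * Y + ε * ν₂ / 4 * X) ^ 2 := by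
      nlinarith [sq_nonneg (ν₁ * η * Y - ε * ν₂ / 4 * X)]
    linarith
  have hA : 0 ≤ ν₁ * η * Y + ε * ν₂ / 4 * X := by positivity
  have hAB : 0 ≤ ν₁ * η * Y + ε * ν₂ / 4 * X + ε * (η - ε / 2) * ρ * S := by
    nlinarith [hB2, hA]
  have hycoef : ν₁ * η * Y ≤ (2 * ν₁ * η - 3 / 2 * ε * ν₁) * Y := by
    apply mul_le_mul_of_nonneg_right _ hY
    nlinarith
  have hmain : 0 ≤ (2 * ν₁ * η - 3 / 2 * ε * ν₁) * Y + ε * ν₂ / 4 * X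
      + ε * (η - ε / 2) * ρ * S := by linarith
  nlinarith [mul_le_mul_of_nonneg_left hmain (sq_nonneg ρ)]

-- lower bound for the energy
lemma low_bd (ν₁ ν₂ μ c ε ρ X Y S : ℝ) (hν₂ : 0 < ν₂) (hμ : 0 < μ)
    (hμ1 : μ ≤ ν₂ / 2) (hμ2 : μ ≤ ν₁) (hεpos : 0 < ε) (hε3 : ε * c ≤ μ)
    (hρ : 0 < ρ) (hρc : ρ ≤ c) (hX : 0 ≤ X) (hY : 0 ≤ Y)
    (hSl : -((X + Y) / 2) ≤ S) (hSu : S ≤ (X + Y) / 2) :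
    μ / 2 * (X + Y) ≤ ν₂ / 2 * X + (ν₁ * Y + ε * ρ * S) := by
  have hcross : -(μ * (X + Y) / 2) ≤ ε * ρ * S := by
    rcases le_or_gt 0 S with h | h
    · have : 0 ≤ ε * ρ * S := by positivity
      nlinarith
    · have h1 : ε * c * S ≤ ε * ρ * S := by
        nlinarith [mul_nonneg hεpos.le (mul_nonneg (sub_nonneg.mpr hρc) (neg_nonneg.mpr h.le))]
      have h2 : μ * S ≤ ε * c * S := by
        nlinarith [mul_nonneg (sub_nonneg.mpr hε3) (neg_nonneg.mpr h.le)]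
      nlinarith
  nlinarith

-- upper bound for the energy
lemma up_bd (ν₁ ν₂ μ c ε ρ X Y S : ℝ) (hν₁ : 0 < ν₁) (hν₂ : 0 < ν₂) (hμ : 0 < μ)
    (hμ1 : μ ≤ ν₂ / 2) (hεpos : 0 < ε) (hε3 : ε * c ≤ μ)
    (hρ : 0 < ρ) (hρc : ρ ≤ c) (hX : 0 ≤ X) (hY : 0 ≤ Y)
    (hSl : -((X + Y) / 2) ≤ S) (hSu : S ≤ (X + Y) / 2) :
    ν₂ / 2 * X + (ν₁ * Y + ε * ρ * S) ≤ (ν₁ + ν₂) * (X + Y) := by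
  have hcross : ε * ρ * S ≤ μ * (X + Y) / 2 := by
    rcases le_or_gt 0 S with h | h
    · have h1 : ε * ρ * S ≤ ε * c * S := by
        nlinarith [mul_nonneg hεpos.le (mul_nonneg (sub_nonneg.mpr hρc) h)]
      have h2 : ε * c * S ≤ μ * S := by
        nlinarith [mul_nonneg (sub_nonneg.mpr hε3) h]
      nlinarith
    · have : ε * ρ * S ≤ 0 := by
        nlinarith [mul_nonneg (mul_pos hεpos hρ).le (neg_nonneg.mpr h.le)]
      nlinarith
  nlinarith


lemma gronwall_decay' {k : ℝ} {L L' : ℝ → ℝ}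
    (hL : ∀ t, 0 ≤ t → HasDerivAt L (L' t) t)
    (hle : ∀ t, 0 ≤ t → L' t ≤ -k * L t) :
    ∀ t, 0 ≤ t → L t ≤ L 0 * Real.exp (-k * t) := by
  intro t ht
  set g : ℝ → ℝ := fun s => L s * Real.exp (k * s) with hg
  have hgd : ∀ s, 0 ≤ s → HasDerivAt g ((L' s + k * L s) * Real.exp (k * s)) s := by
    intro s hs
    have h1 : HasDerivAt (fun s : ℝ => Real.exp (k * s)) (k * Real.exp (k * s)) s := by
      have := (Real.hasDerivAt_exp (k * s)).comp s ((hasDerivAt_id s).const_mul k)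
      simpa [mul_comm, Function.comp_def] using this
    have := (hL s hs).mul h1
    exact this.congr_deriv (by ring)
  have hanti : AntitoneOn g (Set.Ici 0) := by
    apply antitoneOn_of_deriv_nonpos (convex_Ici 0)
    · exact fun s hs => ((hgd s hs).continuousAt).continuousWithinAt
    · intro s hs
      rw [interior_Ici] at hs
      exact ((hgd s (le_of_lt hs)).differentiableAt).differentiableWithinAt
    · intro s hs
      rw [interior_Ici] at hs
      rw [(hgd s hs.le).deriv]
      have := hle s hs.le
      have hexp : 0 < Real.exp (k * s) := Real.exp_pos _
      nlinarith
  have h0 : g t ≤ g 0 := hanti (Set.mem_Ici.mpr le_rfl) (Set.mem_Ici.mpr ht) ht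
  have : g 0 = L 0 := by simp [hg]
  rw [this] at h0
  have hexp : 0 < Real.exp (k * t) := Real.exp_pos _
  have : L t = g t * Real.exp (-k * t) := by
    simp [hg, ← Real.exp_add]
    rw [mul_assoc, ← Real.exp_add]; simp
  rw [this]
  calc g t * Real.exp (-k * t) ≤ L 0 * Real.exp (-k * t) := by
        apply mul_le_mul_of_nonneg_right h0 (Real.exp_pos _).le
    _ = _ := rfl

lemma hasDerivAt_re' {f : ℝ → ℂ} {f' : ℂ} {t : ℝ} (h : HasDerivAt f f' t) :
    HasDerivAt (fun s => (f s).re) f'.re t := by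
  simpa [Function.comp_def] using Complex.reCLM.hasFDerivAt.comp_hasDerivAt t h

lemma hasDerivAt_im' {f : ℝ → ℂ} {f' : ℂ} {t : ℝ} (h : HasDerivAt f f' t) :
    HasDerivAt (fun s => (f s).im) f'.im t := by
  simpa [Function.comp_def] using Complex.imCLM.hasFDerivAt.comp_hasDerivAt t h


set_option maxHeartbeats 2000000 in
/-- Pointwise low-frequency upper bound for the linearized incompressible
Oldroyd-B system on the Fourier side: given any `c > 0` there exist `C, δ > 0`
such that any solution of `u' = ν₁ρZ`, `Z' = −ηρ²Z − (ν₂/2)ρu` with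
`0 < ρ ≤ c` satisfies `|u(t)| + |Z(t)| ≤ C e^{−δρ²t}(|u(0)| + |Z(0)|)` for all
`t ≥ 0`. -/
theorem stmt7 (η ν₁ ν₂ : ℝ) (hη : 0 < η) (hν₁ : 0 < ν₁) (hν₂ : 0 < ν₂)
    (c : ℝ) (hc : 0 < c) :
    ∃ C : ℝ, 0 < C ∧ ∃ δ : ℝ, 0 < δ ∧
      ∀ ρ : ℝ, 0 < ρ → ρ ≤ c →
      ∀ u Z : ℝ → ℂ,
        (∀ t : ℝ, 0 ≤ t → HasDerivAt u ((ν₁ * ρ : ℂ) * Z t) t) →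
        (∀ t : ℝ, 0 ≤ t →
          HasDerivAt Z (-(η * ρ ^ 2 : ℂ) * Z t - ((ν₂ / 2 : ℂ) * ρ) * u t) t) →
        ∀ t : ℝ, 0 ≤ t →
          ‖u t‖ + ‖Z t‖ ≤
            C * Real.exp (-δ * ρ ^ 2 * t) * (‖u 0‖ + ‖Z 0‖) := by
  obtain ⟨μ, hμdef⟩ : ∃ μ : ℝ, μ = min (ν₂ / 2) ν₁ := ⟨_, rfl⟩
  have hμ : 0 < μ := hμdef ▸ lt_min (by positivity) hν₁
  have hμ1 : μ ≤ ν₂ / 2 := hμdef ▸ min_le_left _ _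
  have hμ2 : μ ≤ ν₁ := hμdef ▸ min_le_right _ _
  obtain ⟨ε, hεdef⟩ : ∃ ε : ℝ, ε = min (min (η / 2) (ν₁ * ν₂ / (η * c ^ 2))) (μ / c) :=
    ⟨_, rfl⟩
  have hεpos : 0 < ε := hεdef ▸
    lt_min (lt_min (by positivity) (by positivity)) (by positivity)
  have hε1 : ε ≤ η / 2 := hεdef ▸ le_trans (min_le_left _ _) (min_le_left _ _)
  have hε2 : ε * (η * c ^ 2) ≤ ν₁ * ν₂ := by
    have h : ε ≤ ν₁ * ν₂ / (η * c ^ 2) := hεdef ▸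
      le_trans (min_le_left _ _) (min_le_right _ _)
    exact (le_div_iff₀ (by positivity)).mp h
  have hε3 : ε * c ≤ μ := (le_div_iff₀ hc).mp (hεdef ▸ min_le_right _ _)
  refine ⟨Real.sqrt (4 * (ν₁ + ν₂) / μ), Real.sqrt_pos.mpr (by positivity),
    ε / 4, by positivity, ?_⟩
  intro ρ hρ hρc u Z hu hZ t ht
  -- real components and their derivatives
  have hur : ∀ r, 0 ≤ r → HasDerivAt (fun s => (u s).re) (ν₁ * ρ * (Z r).re) r := by
    intro r hr; simpa [Complex.mul_re] using hasDerivAt_re' (hu r hr)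
  have hui : ∀ r, 0 ≤ r → HasDerivAt (fun s => (u s).im) (ν₁ * ρ * (Z r).im) r := by
    intro r hr; simpa [Complex.mul_im] using hasDerivAt_im' (hu r hr)
  have hZcast : ∀ r, 0 ≤ r → HasDerivAt Z
      (((-(η * ρ ^ 2) : ℝ) : ℂ) * Z r + ((-(ν₂ / 2 * ρ) : ℝ) : ℂ) * u r) r := by
    intro r hr; convert hZ r hr using 1; push_cast; ring
  have hZr : ∀ r, 0 ≤ r → HasDerivAt (fun s => (Z s).re)
      (-(η * ρ ^ 2) * (Z r).re + -(ν₂ / 2 * ρ) * (u r).re) r := by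
    intro r hr
    simpa [Complex.add_re, Complex.mul_re, ← Complex.ofReal_pow] using
      hasDerivAt_re' (hZcast r hr)
  have hZi : ∀ r, 0 ≤ r → HasDerivAt (fun s => (Z s).im)
      (-(η * ρ ^ 2) * (Z r).im + -(ν₂ / 2 * ρ) * (u r).im) r := by
    intro r hr
    simpa [Complex.add_im, Complex.mul_im, ← Complex.ofReal_pow] using
      hasDerivAt_im' (hZcast r hr)
  -- energy functional
  obtain ⟨x, hxdef⟩ : ∃ x : ℝ → ℝ,
      x = fun s => (u s).re * (u s).re + (u s).im * (u s).im := ⟨_, rfl⟩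
  obtain ⟨y, hydef⟩ : ∃ y : ℝ → ℝ,
      y = fun s => (Z s).re * (Z s).re + (Z s).im * (Z s).im := ⟨_, rfl⟩
  obtain ⟨sf, hsdef⟩ : ∃ sf : ℝ → ℝ,
      sf = fun s => (u s).re * (Z s).re + (u s).im * (Z s).im := ⟨_, rfl⟩
  obtain ⟨L, hLdef⟩ : ∃ L : ℝ → ℝ,
      L = fun s => ν₂ / 2 * x s + (ν₁ * y s + ε * ρ * sf s) := ⟨_, rfl⟩
  obtain ⟨L', hL'def⟩ : ∃ L' : ℝ → ℝ,
      L' = fun s => -(2 * ν₁ * η * ρ ^ 2) * y s + ε * ρ ^ 2 * ν₁ * y s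
        - ε * η * ρ ^ 3 * sf s - ε * (ν₂ / 2) * ρ ^ 2 * x s := ⟨_, rfl⟩
  have hxnn : ∀ r, 0 ≤ x r := by
    intro r; simp only [hxdef]; exact add_nonneg (mul_self_nonneg _) (mul_self_nonneg _)
  have hynn : ∀ r, 0 ≤ y r := by
    intro r; simp only [hydef]; exact add_nonneg (mul_self_nonneg _) (mul_self_nonneg _)
  have hs2 : ∀ r, sf r ^ 2 ≤ x r * y r := by
    intro r
    simp only [hxdef, hydef, hsdef]
    nlinarith [sq_nonneg ((u r).re * (Z r).im - (u r).im * (Z r).re)]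
  have hsl : ∀ r, -((x r + y r) / 2) ≤ sf r := by
    intro r
    simp only [hxdef, hydef, hsdef]
    nlinarith [sq_nonneg ((u r).re + (Z r).re), sq_nonneg ((u r).im + (Z r).im)]
  have hsu : ∀ r, sf r ≤ (x r + y r) / 2 := by
    intro r
    simp only [hxdef, hydef, hsdef]
    nlinarith [sq_nonneg ((u r).re - (Z r).re), sq_nonneg ((u r).im - (Z r).im)]
  have hLd : ∀ r, 0 ≤ r → HasDerivAt L (L' r) r := by
    intro r hr
    have h1 := hur r hr; have h2 := hui r hr
    have h3 := hZr r hr; have h4 := hZi r hr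
    have H := (((h1.mul h1).add (h2.mul h2)).const_mul (ν₂ / 2)).add
      ((((h3.mul h3).add (h4.mul h4)).const_mul ν₁).add
        (((h1.mul h3).add (h2.mul h4)).const_mul (ε * ρ)))
    simp only [hLdef, hL'def, hxdef, hydef, hsdef]
    exact H.congr_deriv (by ring)
  have hkey : ∀ r, 0 ≤ r → L' r ≤ -(ε / 2 * ρ ^ 2) * L r := by
    intro r hr
    simp only [hL'def, hLdef]
    exact quad_key η ν₁ ν₂ c ε ρ (x r) (y r) (sf r) hη hν₁ hν₂ hc hεpos hε1 hε2
      hρ hρc (hxnn r) (hynn r) (hs2 r)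
  have hgron := gronwall_decay' hLd hkey t ht
  have hlow : μ / 2 * (x t + y t) ≤ L t := by
    simp only [hLdef]
    exact low_bd ν₁ ν₂ μ c ε ρ (x t) (y t) (sf t) hν₂ hμ hμ1 hμ2 hεpos hε3
      hρ hρc (hxnn t) (hynn t) (hsl t) (hsu t)
  have hup : L 0 ≤ (ν₁ + ν₂) * (x 0 + y 0) := by
    simp only [hLdef]
    exact up_bd ν₁ ν₂ μ c ε ρ (x 0) (y 0) (sf 0) hν₁ hν₂ hμ hμ1 hεpos hε3
      hρ hρc (hxnn 0) (hynn 0) (hsl 0) (hsu 0)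
  -- abs and components
  have habs : ∀ r, ‖u r‖ ^ 2 = x r ∧ ‖Z r‖ ^ 2 = y r := by
    intro r
    constructor
    · simp only [hxdef]; rw [Complex.sq_norm, Complex.normSq_apply]
    · simp only [hydef]; rw [Complex.sq_norm, Complex.normSq_apply]
  clear hu hZ hur hui hZcast hZr hZi hLd hkey hs2 hsl hsu hxdef hydef hsdef
  clear hL'def L' hLdef hεdef hμdef sf
  have hAnn : 0 ≤ ‖u t‖ := norm_nonneg _
  have hBnn : 0 ≤ ‖Z t‖ := norm_nonneg _
  have hA0nn : 0 ≤ ‖u 0‖ := norm_nonneg _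
  have hB0nn : 0 ≤ ‖Z 0‖ := norm_nonneg _
  have h1 : (‖u t‖ + ‖Z t‖) ^ 2 ≤ 2 * (x t + y t) := by
    nlinarith [sq_nonneg (‖u t‖ - ‖Z t‖), (habs t).1, (habs t).2]
  have h5 : x 0 + y 0 ≤ (‖u 0‖ + ‖Z 0‖) ^ 2 := by
    nlinarith [(habs 0).1, (habs 0).2, mul_nonneg hA0nn hB0nn]
  obtain ⟨E, hE⟩ : ∃ E : ℝ, E = Real.exp (-(ε / 2 * ρ ^ 2) * t) := ⟨_, rfl⟩
  rw [← hE] at hgron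
  have hEpos : 0 < E := hE ▸ Real.exp_pos _
  have hμsq : μ * (‖u t‖ + ‖Z t‖) ^ 2 ≤
      4 * (ν₁ + ν₂) * E * (‖u 0‖ + ‖Z 0‖) ^ 2 := by
    have s1 : μ * (‖u t‖ + ‖Z t‖) ^ 2 ≤ 2 * μ * (x t + y t) := by
      nlinarith
    have s2 : 2 * μ * (x t + y t) ≤ 4 * L t := by linarith
    have s3 : 4 * L t ≤ 4 * (L 0 * E) := by linarith [hgron]
    have s4 : 4 * (L 0 * E) ≤ 4 * (ν₁ + ν₂) * E *
        (‖u 0‖ + ‖Z 0‖) ^ 2 := by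
      have h6 : L 0 ≤ (ν₁ + ν₂) * (‖u 0‖ + ‖Z 0‖) ^ 2 :=
        hup.trans (mul_le_mul_of_nonneg_left h5 (by positivity))
      calc 4 * (L 0 * E)
          ≤ 4 * ((ν₁ + ν₂) * (‖u 0‖ + ‖Z 0‖) ^ 2 * E) := by
            have := mul_le_mul_of_nonneg_right h6 hEpos.le
            linarith
        _ = 4 * (ν₁ + ν₂) * E * (‖u 0‖ + ‖Z 0‖) ^ 2 := by ring
    linarith
  obtain ⟨R, hR⟩ : ∃ R : ℝ,
      R = Real.sqrt (4 * (ν₁ + ν₂) / μ) * Real.exp (-(ε / 4) * ρ ^ 2 * t) *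
        (‖u 0‖ + ‖Z 0‖) := ⟨_, rfl⟩
  have hRnn : 0 ≤ R := by rw [hR]; positivity
  have hR2 : R ^ 2 = 4 * (ν₁ + ν₂) / μ * E *
      (‖u 0‖ + ‖Z 0‖) ^ 2 := by
    have hsq : Real.sqrt (4 * (ν₁ + ν₂) / μ) ^ 2 = 4 * (ν₁ + ν₂) / μ :=
      Real.sq_sqrt (by positivity)
    have hexp2 : Real.exp (-(ε / 4) * ρ ^ 2 * t) ^ 2 = E := by
      rw [sq, ← Real.exp_add, hE]
      ring_nf
    calc R ^ 2 = Real.sqrt (4 * (ν₁ + ν₂) / μ) ^ 2 *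
          Real.exp (-(ε / 4) * ρ ^ 2 * t) ^ 2 *
          (‖u 0‖ + ‖Z 0‖) ^ 2 := by rw [hR]; ring
      _ = _ := by rw [hsq, hexp2]
  have hsqle : (‖u t‖ + ‖Z t‖) ^ 2 ≤ R ^ 2 := by
    rw [hR2]
    have heq : μ * (4 * (ν₁ + ν₂) / μ * E * (‖u 0‖ + ‖Z 0‖) ^ 2) =
        4 * (ν₁ + ν₂) * E * (‖u 0‖ + ‖Z 0‖) ^ 2 := by
      field_simp
    rw [← heq] at hμsq
    exact le_of_mul_le_mul_left hμsq hμ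
  have hfin : ‖u t‖ + ‖Z t‖ ≤ R := by
    nlinarith [hsqle, hRnn, hAnn, hBnn]
  rw [hR] at hfin
  simpa using hfin
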